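/- In the van Benthem general frame 𝒱ℬ = ⟨W, R, 𝒜⟩, where W = ℕ ∪ {∞, ∞+1}, R relates ∞+1 to ∞, ∞ to itself and to every n ∈ ℕ, and m to n for m,n ∈ ℕ with m > n, and 𝒜 consists of the finite sets not containing ∞ together with the cofinite sets containing ∞: the collection 𝒜 is closed under union, relative complement, and the operation X ↦ R⁻¹[X] = {w | ∃x ∈ X, wRx}. -/
import Mathlib


/-- Worlds of the van Benthem frame: ℕ together with ∞ and ∞+1. -/
inductive VBW : Type
  | nat : ℕ → VBW
  | inf : VBW
  | infp : VBW

/-- Accessibility relation of the van Benthem frame. -/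
def VBR : VBW → VBW → Prop
  | VBW.infp, VBW.inf => True
  | VBW.inf, VBW.inf => True
  | VBW.inf, VBW.nat _ => True
  | VBW.nat m, VBW.nat n => n < m
  | _, _ => False

/-- Admissible sets: finite sets not containing ∞ and cofinite sets containing ∞. -/
def VBAdm (A : Set VBW) : Prop :=
  (A.Finite ∧ VBW.inf ∉ A) ∨ (Aᶜ.Finite ∧ VBW.inf ∈ A)

lemma vb_key (A : Set VBW) (k : ℕ) (hk : VBW.nat k ∈ A) :
    ({w | ∃ x ∈ A, VBR w x}ᶜ).Finite ∧ VBW.inf ∈ {w | ∃ x ∈ A, VBR w x} := by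
  constructor
  · apply Set.Finite.subset
      (((Set.finite_Iic k).image VBW.nat).union (Set.finite_singleton VBW.infp))
    intro w hw
    match w with
    | VBW.infp => exact Or.inr rfl
    | VBW.inf => exact absurd ⟨_, hk, trivial⟩ hw
    | VBW.nat m =>
      left
      refine ⟨m, ?_, rfl⟩
      by_contra hm
      exact hw ⟨_, hk, show k < m from Nat.lt_of_not_le (by simpa using hm)⟩
  · exact ⟨_, hk, trivial⟩

/-- The admissible sets of the van Benthem general frame are closed under
union, (relative) complement, and the operation `X ↦ R⁻¹[X]`. -/
theorem stmt_11 :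
    (∀ A B : Set VBW, VBAdm A → VBAdm B → VBAdm (A ∪ B)) ∧
    (∀ A : Set VBW, VBAdm A → VBAdm Aᶜ) ∧
    (∀ A : Set VBW, VBAdm A → VBAdm {w | ∃ x ∈ A, VBR w x}) := by
  refine ⟨?_, ?_, ?_⟩
  · rintro A B (⟨hA, hAi⟩ | ⟨hA, hAi⟩) hB
    · rcases hB with ⟨hB, hBi⟩ | ⟨hB, hBi⟩
      · exact Or.inl ⟨hA.union hB, by simp [hAi, hBi]⟩
      · refine Or.inr ⟨Set.Finite.subset hB ?_, Or.inr hBi⟩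
        rw [Set.compl_union]; exact Set.inter_subset_right
    · refine Or.inr ⟨Set.Finite.subset hA ?_, Or.inl hAi⟩
      rw [Set.compl_union]; exact Set.inter_subset_left
  · rintro A (⟨hA, hAi⟩ | ⟨hA, hAi⟩)
    · exact Or.inr ⟨by simpa using hA, hAi⟩
    · exact Or.inl ⟨hA, by simpa using hAi⟩
  · rintro A (⟨hA, hAi⟩ | ⟨hA, hAi⟩)
    · by_cases h : ∃ k, VBW.nat k ∈ A
      · obtain ⟨k, hk⟩ := h
        exact Or.inr (vb_key A k hk)
      · push_neg at h
        have hsub : {w | ∃ x ∈ A, VBR w x} ⊆ ∅ := by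
          rintro w ⟨x, hx, hR⟩
          cases x with
          | inf => exact absurd hx hAi
          | nat n => exact absurd hx (h n)
          | infp => cases w <;> exact hR
        exact Or.inl ⟨Set.Finite.subset Set.finite_empty hsub, fun hc => hsub hc⟩
    · have hfin : (VBW.nat ⁻¹' Aᶜ).Finite :=
        hA.preimage (Function.Injective.injOn (fun a b h => by cases h; rfl))
      obtain ⟨k, hk⟩ := hfin.infinite_compl.nonempty
      exact Or.inr (vb_key A k (by simpa using hk))
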